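/- For every positive integer c and all integers k ≥ 2c, t ≥ c, there exists a set of k(t+2)+c−1 points in the plane that admits no t-tolerant partition into k parts; hence N(2,k,t) ≥ k(t+2)+c. -/

import Mathlib

/-- Points of `ℝ^d`. -/
abbrev Pt (d : ℕ) := EuclideanSpace ℝ (Fin d)

noncomputable instance {d : ℕ} : DecidableEq (Pt d) := Classical.decEq _

/-- `Q` is a partition of the finite set `P` into `k` parts. -/
def IsPartition {d k : ℕ} (P : Finset (Pt d)) (Q : Fin k → Finset (Pt d)) : Prop :=
  (∀ i j : Fin k, i ≠ j → Disjoint (Q i) (Q j)) ∧ P = Finset.univ.biUnion Q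

/-- The partition `Q` of `P` is `t`-tolerant: after removing any set `Y` of at most `t`
points, the convex hulls of the parts still have a common point. -/
def IsTolerant {d k : ℕ} (t : ℕ) (P : Finset (Pt d)) (Q : Fin k → Finset (Pt d)) : Prop :=
  ∀ Y ⊆ P, Y.card ≤ t →
    (⋂ i : Fin k, convexHull ℝ ((Q i \ Y : Finset (Pt d)) : Set (Pt d))).Nonempty

section Helpers

open Real RealInnerProductSpace

/-- A point of the plane from coordinates. -/
noncomputable def pt (x y : ℝ) : Pt 2 := !₂[x, y]

lemma inner_pt (a b x y : ℝ) : ⟪pt a b, pt x y⟫ = a*x + b*y := by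
  simp [pt, PiLp.inner_apply, Fin.sum_univ_two, RCLike.inner_apply]
  ring

/-- Vertices of a regular `m`-gon. -/
noncomputable def vtx (m i : ℕ) : Pt 2 := pt (cos (2*π*i/m)) (sin (2*π*i/m))

/-- Points near the center. -/
noncomputable def ctr (c j : ℕ) : Pt 2 := pt ((j+1)/(4*c)) 0

lemma inner_vtx (m i j : ℕ) : ⟪vtx m i, vtx m j⟫ = cos (2*π*i/m - 2*π*j/m) := by
  rw [vtx, vtx, inner_pt, Real.cos_sub]

lemma inner_vtx_self (m i : ℕ) : ⟪vtx m i, vtx m i⟫ = 1 := by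
  rw [inner_vtx]; simp

lemma inner_vtx_ctr (m c p j : ℕ) : ⟪vtx m p, ctr c j⟫ = cos (2*π*p/m) * ((j+1)/(4*c)) := by
  rw [vtx, ctr, inner_pt]; ring

lemma vtx_mod (m : ℕ) (hm : 0 < m) (i : ℕ) : vtx m (i % m) = vtx m i := by
  have hm' : (m:ℝ) ≠ 0 := Nat.cast_ne_zero.2 hm.ne'
  have hcast : (m : ℝ) * ((i/m : ℕ) : ℝ) + ((i % m : ℕ) : ℝ) = (i : ℝ) := by
    exact_mod_cast Nat.div_add_mod i m
  have h : 2*π*((i % m : ℕ) : ℝ)/(m:ℝ) + ((i/m : ℕ) : ℝ)*(2*π) = 2*π*(i:ℝ)/(m:ℝ) := by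
    field_simp
    linear_combination hcast
  rw [vtx, vtx, ← h, Real.cos_add_nat_mul_two_pi, Real.sin_add_nat_mul_two_pi]

lemma inner_vtx_shift (m α g : ℕ) (hm : 0 < m) :
    ⟪vtx m α, vtx m ((α + g) % m)⟫ = cos (2*π*g/m) := by
  have hm' : (m:ℝ) ≠ 0 := Nat.cast_ne_zero.2 hm.ne'
  rw [vtx_mod m hm, inner_vtx]
  have h : 2*π*(α:ℝ)/m - 2*π*((α:ℝ)+(g:ℝ))/m = -(2*π*g/m) := by field_simp; ring
  push_cast
  rw [h, Real.cos_neg]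

lemma cosK {y x : ℝ} (h0 : 0 ≤ y) (h1 : y < x) (h2 : x < 2*π - y) : cos x < cos y := by
  have hπ : (0:ℝ) < π := Real.pi_pos
  have hyπ : y < π := by linarith
  rcases le_or_gt x π with hx | hx
  · exact Real.strictAntiOn_cos ⟨h0, hyπ.le⟩ ⟨by linarith, hx⟩ h1
  · have hc : cos x = cos (2*π - x) := by rw [Real.cos_two_pi_sub]
    rw [hc]
    exact Real.strictAntiOn_cos ⟨h0, hyπ.le⟩ ⟨by linarith, by linarith⟩ (by linarith)

lemma cos_lt_one_arc {x : ℝ} (h1 : 0 < x) (h2 : x < 2*π) : cos x < 1 := by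
  have := cosK (y := 0) le_rfl h1 (by linarith)
  simpa using this

/-- The separating chord inequality. -/
lemma main_ineq (m g j : ℕ) (hm : 0 < m) (hg1 : 1 ≤ g) (h3g : 3*g < m)
    (hj1 : g < j) (hj2 : j < m) :
    cos (2*π*j/m) + cos (2*π*(j-g:ℕ)/m) < 1 + cos (2*π*g/m) := by
  have hπ : (0:ℝ) < π := Real.pi_pos
  have hm' : (0:ℝ) < m := by exact_mod_cast hm
  have hgr : (1:ℝ) ≤ g := by exact_mod_cast hg1
  have h3gr : 3*(g:ℝ) < m := by exact_mod_cast h3g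
  have hj1r : (g:ℝ) < j := by exact_mod_cast hj1
  have hj2r : (j:ℝ) < m := by exact_mod_cast hj2
  have hjg : ((j-g:ℕ):ℝ) = (j:ℝ) - g := by
    have : g ≤ j := hj1.le
    push_cast [this]; ring
  set ψ := π*(g:ℝ)/m with hψ
  set φ := π*(2*(j:ℝ)-g)/m with hφ
  have X : 2*π*(j:ℝ)/m = φ + ψ := by rw [hφ, hψ]; field_simp; ring
  have Y : 2*π*((j:ℝ)-g)/m = φ - ψ := by rw [hφ, hψ]; field_simp; ring
  have e1 : cos (2*π*j/m) + cos (2*π*(j-g:ℕ)/m) = 2 * cos φ * cos ψ := by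
    rw [hjg, X, Y, Real.cos_add_cos]
    ring_nf
  have e2 : 1 + cos (2*π*(g:ℝ)/m) = 2 * cos ψ ^ 2 := by
    have h2 : 2*π*(g:ℝ)/m = 2 * ψ := by rw [hψ]; ring
    rw [h2, Real.cos_sq ψ]; ring
  rw [e1, e2]
  have hψpos : 0 < ψ := by positivity
  have hψlt : ψ < π/2 := by
    rw [hψ, div_lt_iff₀ hm']
    nlinarith
  have hcψ : 0 < cos ψ := Real.cos_pos_of_mem_Ioo ⟨by linarith, hψlt⟩
  have hlt1 : ψ < φ := by
    rw [hψ, hφ, div_lt_div_iff₀ hm' hm']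
    nlinarith [mul_pos hπ hm']
  have hlt2 : φ < 2*π - ψ := by
    have hX : φ + ψ < 2*π := by
      rw [← X, div_lt_iff₀ hm']
      nlinarith
    linarith
  have hkey : cos φ < cos ψ := cosK hψpos.le hlt1 hlt2
  nlinarith [mul_pos (sub_pos.2 hkey) hcψ]

lemma cos_g_gt (m g : ℕ) (hm : 0 < m) (h3g : 3*g < m) : -(1/2) < cos (2*π*g/m) := by
  have hπ : (0:ℝ) < π := Real.pi_pos
  have hm' : (0:ℝ) < m := by exact_mod_cast hm
  have h3gr : 3*(g:ℝ) < m := by exact_mod_cast h3g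
  have h1 : 2*π*(g:ℝ)/m < 2*π/3 := by
    rw [div_lt_div_iff₀ hm' (by norm_num : (0:ℝ) < 3)]
    nlinarith
  have h2 : cos (2*π/3) = -(1/2) := by
    have h3 : 2*π/3 = π - π/3 := by ring
    rw [h3, Real.cos_pi_sub, Real.cos_pi_div_three]
  rw [← h2]
  exact Real.strictAntiOn_cos ⟨by positivity, by linarith⟩ ⟨by positivity, by linarith⟩ h1

lemma inner_vtx_lt_one (m : ℕ) (hm : 0 < m) {i p : ℕ} (hi : i < m) (hp : p < m)
    (hne : i ≠ p) : ⟪vtx m p, vtx m i⟫ < 1 := by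
  have hπ : (0:ℝ) < π := Real.pi_pos
  have hmr : (0:ℝ) < m := by exact_mod_cast hm
  set J := (i + m - p) % m with hJ
  have hJm : J < m := Nat.mod_lt _ hm
  have hJi : (p + J) % m = i := by
    calc (p + J) % m = (p + (i + m - p)) % m := by rw [hJ, Nat.add_mod_mod]
    _ = (i + m) % m := by congr 1; omega
    _ = i % m := Nat.add_mod_right i m
    _ = i := Nat.mod_eq_of_lt hi
  have hJ0 : J ≠ 0 := by
    intro h
    apply hne
    rw [← hJi, h, Nat.add_zero, Nat.mod_eq_of_lt hp]
  have hs := inner_vtx_shift m p J hm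
  rw [hJi] at hs
  rw [hs]
  have hJr : (1:ℝ) ≤ J := by exact_mod_cast Nat.one_le_iff_ne_zero.2 hJ0
  have hJr2 : (J:ℝ) < m := by exact_mod_cast hJm
  apply cos_lt_one_arc
  · apply div_pos (by nlinarith) hmr
  · rw [div_lt_iff₀ hmr]; nlinarith

lemma vtx_ne (m : ℕ) (hm : 0 < m) {i p : ℕ} (hi : i < m) (hp : p < m) (hne : i ≠ p) :
    vtx m i ≠ vtx m p := by
  intro h
  have h1 := inner_vtx_lt_one m hm hi hp hne
  rw [h, inner_vtx_self] at h1
  linarith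

lemma inner_vtx_ctr_le (m c p j : ℕ) (hc : 1 ≤ c) (hj : j < c) :
    ⟪vtx m p, ctr c j⟫ ≤ 1/4 := by
  rw [inner_vtx_ctr]
  have h1 : Real.cos (2*π*p/m) ≤ 1 := Real.cos_le_one _
  have h2 : -1 ≤ Real.cos (2*π*p/m) := Real.neg_one_le_cos _
  have hcr : (1:ℝ) ≤ c := by exact_mod_cast hc
  have hjr : (j:ℝ) + 1 ≤ c := by exact_mod_cast hj
  have hw1 : 0 < ((j:ℝ)+1)/(4*c) := by positivity
  have hw2 : ((j:ℝ)+1)/(4*c) ≤ 1/4 := by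
    rw [div_le_div_iff₀ (by positivity) (by norm_num)]
    nlinarith
  nlinarith

lemma ctr_ne_vtx (m c p j : ℕ) (hc : 1 ≤ c) (hj : j < c) : ctr c j ≠ vtx m p := by
  intro h
  have h1 := inner_vtx_ctr_le m c p j hc hj
  rw [← h] at h1
  rw [h, inner_vtx_self] at h1
  norm_num at h1

lemma ctr_inj (c : ℕ) (hc : 1 ≤ c) {j j' : ℕ} (h : ctr c j = ctr c j') : j = j' := by
  have hcr : (0:ℝ) < c := by exact_mod_cast hc
  have h1 : ⟪pt 1 0, ctr c j⟫ = ((j:ℝ)+1)/(4*c) := by rw [ctr, inner_pt]; ring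
  have h2 : ⟪pt 1 0, ctr c j'⟫ = ((j':ℝ)+1)/(4*c) := by rw [ctr, inner_pt]; ring
  have h0 : ((j:ℝ)+1)/(4*c) = ((j':ℝ)+1)/(4*c) := by rw [← h1, ← h2, h]
  field_simp at h0
  exact_mod_cast (by linarith : (j:ℝ) = j')

lemma hull_lt {u : Pt 2} {r : ℝ} {T : Set (Pt 2)} (h : ∀ s ∈ T, ⟪u, s⟫ < r) :
    convexHull ℝ T ⊆ {y | ⟪u, y⟫ < r} :=
  convexHull_min h (convex_halfSpace_lt ⟨fun a b => inner_add_right u a b,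
    fun c x => real_inner_smul_right u x c⟩ r)

lemma hull_ge {u : Pt 2} {r : ℝ} {T : Set (Pt 2)} (h : ∀ s ∈ T, r ≤ ⟪u, s⟫) :
    convexHull ℝ T ⊆ {y | r ≤ ⟪u, y⟫} :=
  convexHull_min h (convex_halfSpace_ge ⟨fun a b => inner_add_right u a b,
    fun c x => real_inner_smul_right u x c⟩ r)

lemma pigeon (m k : ℕ) (hm : 0 < m) (I : Finset ℕ)
    (hI : I ⊆ Finset.range m) (hcard : m < I.card * k) :
    ∃ α ∈ I, ∃ g, 1 ≤ g ∧ g ≤ k - 1 ∧ (α + g) % m ∈ I := by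
  by_contra hcon
  push_neg at hcon
  have hmaps : ∀ p ∈ I ×ˢ Finset.range k, (p.1 + p.2) % m ∈ Finset.range m :=
    fun p _ => Finset.mem_range.2 (Nat.mod_lt _ hm)
  have key : ∀ x ∈ I, ∀ x' ∈ I, ∀ j j', j' ≤ j → j < k →
      (x + j) % m = (x' + j') % m → x = x' ∧ j = j' := by
    intro x hx x' hx' j j' hle hjk heq
    have hxm : x < m := Finset.mem_range.1 (hI hx)
    have hx'm : x' < m := Finset.mem_range.1 (hI hx')
    have hmod : (x + (j - j')) % m = x' := by
      have h1 : (x + (j - j')) + j' = x + j := by omega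
      have h2 : ((x + (j - j')) + j') % m = (x' + j') % m := by rw [h1, heq]
      have h3 : (x + (j - j')) % m = x' % m :=
        Nat.ModEq.add_right_cancel' j' (h2 : _ ≡ _ [MOD m])
      rwa [Nat.mod_eq_of_lt hx'm] at h3
    rcases Nat.eq_or_lt_of_le (Nat.zero_le (j - j')) with h0 | hpos
    · have hjj : j = j' := by omega
      subst hjj
      have : x = x' := by rw [← hmod]; simp [Nat.mod_eq_of_lt hxm, ← h0]
      exact ⟨this, rfl⟩
    · exact absurd hmod (by
        intro hmem
        exact hcon x hx (j - j') (by omega) (by omega) (hmem ▸ hx'))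
  have hinj : Set.InjOn (fun p : ℕ × ℕ => (p.1 + p.2) % m) ↑(I ×ˢ Finset.range k) := by
    rintro ⟨x, j⟩ hxj ⟨x', j'⟩ hxj' heq
    rw [Finset.mem_coe, Finset.mem_product, Finset.mem_range] at hxj hxj'
    rcases le_or_gt j' j with h | h
    · obtain ⟨h1, h2⟩ := key x hxj.1 x' hxj'.1 j j' h hxj.2 heq
      simp [h1, h2]
    · obtain ⟨h1, h2⟩ := key x' hxj'.1 x hxj.1 j' j h.le hxj'.2 heq.symm
      simp [h1, h2]
  have := Finset.card_le_card_of_injOn _ hmaps hinj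
  rw [Finset.card_product, Finset.card_range, Finset.card_range] at this
  omega

end Helpers

open Real RealInnerProductSpace

/-- Theorem 2: for every positive integer `c` and all `k ≥ 2c`, `t ≥ c`, there is a set of
`k(t+2) + c - 1` points in the plane with no `t`-tolerant partition into `k` parts;
hence `N(2,k,t) ≥ k(t+2) + c`. -/
theorem lower_bound_N2kt (c k t : ℕ) (hc : 1 ≤ c) (hk : 2 * c ≤ k) (ht : c ≤ t) :
    ∃ S : Finset (Pt 2), S.card = k * (t + 2) + c - 1 ∧
      ∀ Q : Fin k → Finset (Pt 2), IsPartition S Q → ¬ IsTolerant t S Q := by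
  classical
  have hk2 : 2 ≤ k := le_trans (by omega) hk
  have ht1 : 1 ≤ t := le_trans hc ht
  set m := k * (t + 2) - 1 with hmdef
  have h3k : 3 * k ≤ k * (t + 2) := by
    calc 3 * k = k * 3 := Nat.mul_comm 3 k
    _ ≤ k * (t + 2) := Nat.mul_le_mul_left k (by omega)
  have hm : 0 < m := by omega
  set VS := (Finset.range m).image (vtx m) with hVS
  set CS := (Finset.range c).image (ctr c) with hCS
  set S := VS ∪ CS with hS
  have hVScard : VS.card = m := by
    rw [hVS, Finset.card_image_of_injOn, Finset.card_range]
    intro i hi j hj hij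
    by_contra hne
    exact vtx_ne m hm (Finset.mem_range.1 hi) (Finset.mem_range.1 hj) hne hij
  have hCScard : CS.card = c := by
    rw [hCS, Finset.card_image_of_injOn, Finset.card_range]
    intro i _ j _ hij
    exact ctr_inj c hc hij
  have hdisjVC : Disjoint VS CS := by
    rw [Finset.disjoint_left]
    intro x hxV hxC
    obtain ⟨p, _, hpv⟩ := Finset.mem_image.1 hxV
    obtain ⟨j, hj, hjv⟩ := Finset.mem_image.1 hxC
    exact ctr_ne_vtx m c p j hc (Finset.mem_range.1 hj) (by rw [hjv, hpv])
  have hScard : S.card = m + c := by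
    rw [hS, Finset.card_union_of_disjoint hdisjVC, hVScard, hCScard]
  refine ⟨S, by rw [hScard]; omega, ?_⟩
  intro Q hPart hTol
  obtain ⟨hdisj, hunion⟩ := hPart
  have hQsub : ∀ i, Q i ⊆ S := by
    intro i
    rw [hunion]
    exact Finset.subset_biUnion_of_mem Q (Finset.mem_univ i)
  have hsize1 : ∀ i, t + 1 ≤ (Q i).card := by
    intro i
    by_contra hlt
    push_neg at hlt
    obtain ⟨x, hx⟩ := hTol (Q i) (hQsub i) (by omega)
    have hxi := Set.mem_iInter.1 hx i
    rw [Finset.sdiff_self, Finset.coe_empty, convexHull_empty] at hxi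
    exact hxi
  by_cases hsmall : ∃ i, (Q i).card ≤ t + 1
  · -- a part with exactly t+1 points; strip it to a single polygon vertex
    obtain ⟨a, ha⟩ := hsmall
    have hac : (Q a).card = t + 1 := le_antisymm ha (hsize1 a)
    have hnotsub : ¬ Q a ⊆ CS := by
      intro hsub
      have h1 := Finset.card_le_card hsub
      rw [hac, hCScard] at h1
      omega
    obtain ⟨v, hvQ, hvCS⟩ := Finset.not_subset.1 hnotsub
    have hvVS : v ∈ VS := by
      have h1 := hQsub a hvQ
      rw [hS] at h1
      rcases Finset.mem_union.1 h1 with h | h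
      · exact h
      · exact absurd h hvCS
    obtain ⟨p, hpm, hpv⟩ := Finset.mem_image.1 hvVS
    have hpm' : p < m := Finset.mem_range.1 hpm
    set Y := Q a \ {v} with hYdef
    have hYsub : Y ⊆ S := Finset.Subset.trans Finset.sdiff_subset (hQsub a)
    have hYcard : Y.card = t := by
      rw [hYdef, Finset.card_sdiff_of_subset (Finset.singleton_subset_iff.2 hvQ), hac,
        Finset.card_singleton]
      omega
    obtain ⟨x, hx⟩ := hTol Y hYsub hYcard.le
    have hxa := Set.mem_iInter.1 hx a
    have hQaY : Q a \ Y = {v} := by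
      rw [hYdef, Finset.sdiff_sdiff_self_left,
        Finset.inter_eq_right.2 (Finset.singleton_subset_iff.2 hvQ)]
    rw [hQaY, Finset.coe_singleton, convexHull_singleton, Set.mem_singleton_iff] at hxa
    have : Nontrivial (Fin k) :=
      ⟨⟨⟨0, by omega⟩, ⟨1, by omega⟩, by simp [Fin.ext_iff]⟩⟩
    obtain ⟨b, hb⟩ := exists_ne a
    have hxb := Set.mem_iInter.1 hx b
    have hbound : ∀ s ∈ ((Q b \ Y : Finset (Pt 2)) : Set (Pt 2)), ⟪vtx m p, s⟫ < 1 := by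
      intro s hs
      have hsQb : s ∈ Q b := (Finset.mem_sdiff.1 (Finset.mem_coe.1 hs)).1
      have hsv : s ≠ v := by
        intro h
        exact Finset.disjoint_left.1 (hdisj b a hb) hsQb (h ▸ hvQ)
      have hsS := hQsub b hsQb
      rw [hS] at hsS
      rcases Finset.mem_union.1 hsS with hV | hC
      · obtain ⟨i, him, hiv⟩ := Finset.mem_image.1 hV
        have him' : i < m := Finset.mem_range.1 him
        have hip : i ≠ p := by
          intro h
          apply hsv
          rw [← hiv, h, hpv]
        rw [← hiv]
        exact inner_vtx_lt_one m hm him' hpm' hip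
      · obtain ⟨j, hjc, hjv⟩ := Finset.mem_image.1 hC
        rw [← hjv]
        calc ⟪vtx m p, ctr c j⟫ ≤ 1/4 :=
              inner_vtx_ctr_le m c p j hc (Finset.mem_range.1 hjc)
        _ < 1 := by norm_num
    have hlt := hull_lt hbound hxb
    simp only [Set.mem_setOf_eq] at hlt
    rw [hxa, ← hpv, inner_vtx_self] at hlt
    exact lt_irrefl _ hlt
  · -- all parts have ≥ t+2 points
    push_neg at hsmall
    have hsum : ∑ i : Fin k, (Q i).card = m + c := by
      have h1 : S.card = m + c := hScard
      rw [hunion, Finset.card_biUnion (fun x _ y _ hxy => hdisj x y hxy)] at h1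
      exact h1
    set Big := Finset.univ.filter (fun i : Fin k => t + 3 ≤ (Q i).card) with hBigdef
    have hBig : Big.card ≤ c - 1 := by
      have h1 : ∀ i : Fin k, (t+2) + (if t + 3 ≤ (Q i).card then 1 else 0) ≤ (Q i).card := by
        intro i
        have := hsmall i
        split <;> omega
      have h2 : ∑ i : Fin k, ((t+2) + (if t + 3 ≤ (Q i).card then 1 else 0)) ≤ m + c := by
        rw [← hsum]
        exact Finset.sum_le_sum (fun i _ => h1 i)
      rw [Finset.sum_add_distrib, Finset.sum_const, Finset.card_univ, Fintype.card_fin,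
        smul_eq_mul] at h2
      have h3 : Big.card = ∑ i : Fin k, (if t + 3 ≤ (Q i).card then 1 else 0) := by
        rw [hBigdef, Finset.card_filter]
      omega
    set Cen := Finset.univ.filter (fun i : Fin k => (Q i ∩ CS).Nonempty) with hCendef
    have hCen : Cen.card ≤ c := by
      have hmap : ∀ i ∈ Cen,
          (if h : (Q i ∩ CS).Nonempty then h.choose else ctr c 0) ∈ CS := by
        intro i hi
        have hne : (Q i ∩ CS).Nonempty := (Finset.mem_filter.1 hi).2
        rw [dif_pos hne]
        exact (Finset.mem_inter.1 hne.choose_spec).2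
      have hinj : Set.InjOn
          (fun i => if h : (Q i ∩ CS).Nonempty then h.choose else ctr c 0) ↑Cen := by
        intro i hi j hj heq
        by_contra hne
        have hi' : (Q i ∩ CS).Nonempty := (Finset.mem_filter.1 (Finset.mem_coe.1 hi)).2
        have hj' : (Q j ∩ CS).Nonempty := (Finset.mem_filter.1 (Finset.mem_coe.1 hj)).2
        simp only [dif_pos hi', dif_pos hj'] at heq
        have h1 := (Finset.mem_inter.1 hi'.choose_spec).1
        have h2 := (Finset.mem_inter.1 hj'.choose_spec).1
        rw [heq] at h1
        exact Finset.disjoint_left.1 (hdisj i j hne) h1 h2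
      calc Cen.card ≤ CS.card := Finset.card_le_card_of_injOn _ hmap hinj
      _ = c := hCScard
    have hex : ∃ a : Fin k, a ∉ Big ∪ Cen := by
      by_contra hall
      push_neg at hall
      have h1 := Finset.card_le_card (fun x _ => hall x :
        (Finset.univ : Finset (Fin k)) ⊆ Big ∪ Cen)
      rw [Finset.card_univ, Fintype.card_fin] at h1
      have h2 := Finset.card_union_le Big Cen
      omega
    obtain ⟨a, haBC⟩ := hex
    rw [Finset.mem_union] at haBC
    push_neg at haBC
    have haBig : ¬ (t + 3 ≤ (Q a).card) := by
      intro h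
      exact haBC.1 (Finset.mem_filter.2 ⟨Finset.mem_univ a, h⟩)
    have hacard : (Q a).card = t + 2 := by
      have := hsmall a
      omega
    have haCS : ¬ (Q a ∩ CS).Nonempty := by
      intro h
      exact haBC.2 (Finset.mem_filter.2 ⟨Finset.mem_univ a, h⟩)
    have haVS : Q a ⊆ VS := by
      intro s hs
      have h1 := hQsub a hs
      rw [hS] at h1
      rcases Finset.mem_union.1 h1 with h | h
      · exact h
      · exact absurd ⟨s, Finset.mem_inter.2 ⟨hs, h⟩⟩ haCS
    set I := (Finset.range m).filter (fun i => vtx m i ∈ Q a) with hIdef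
    have hIsub : I ⊆ Finset.range m := Finset.filter_subset _ _
    have himg : I.image (vtx m) = Q a := by
      apply Finset.Subset.antisymm
      · intro s hs
        obtain ⟨i, hi, hiv⟩ := Finset.mem_image.1 hs
        exact hiv ▸ (Finset.mem_filter.1 hi).2
      · intro s hs
        obtain ⟨i, him, hiv⟩ := Finset.mem_image.1 (haVS hs)
        exact Finset.mem_image.2 ⟨i, Finset.mem_filter.2 ⟨him, by rw [hiv]; exact hs⟩, hiv⟩
    have hIcard : I.card = t + 2 := by
      rw [← hacard, ← himg]
      refine (Finset.card_image_of_injOn ?_).symm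
      intro i hi j hj hij
      by_contra hne
      exact vtx_ne m hm (Finset.mem_range.1 (hIsub hi)) (Finset.mem_range.1 (hIsub hj)) hne hij
    have hmlt : m < I.card * k := by
      rw [hIcard]
      have h4 : (t+2) * k = k * (t+2) := Nat.mul_comm _ _
      omega
    obtain ⟨α, hαI, g, hg1, hgk, hβI⟩ := pigeon m k hm I hIsub hmlt
    have hαm : α < m := Finset.mem_range.1 (hIsub hαI)
    set β := (α + g) % m with hβdef
    have hβm : β < m := Nat.mod_lt _ hm
    have hαQ : vtx m α ∈ Q a := (Finset.mem_filter.1 hαI).2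
    have hβQ : vtx m β ∈ Q a := (Finset.mem_filter.1 hβI).2
    have h3g : 3 * g < m := by omega
    have hαβ : α ≠ β := by
      intro h
      have h1 : (α + g) % m = α % m := by
        rw [← hβdef, ← h, Nat.mod_eq_of_lt hαm]
      have h2 : m ∣ g := by
        have h3 := (Nat.modEq_iff_dvd' (Nat.le_add_right α g)).1 (h1.symm : _ ≡ _ [MOD m])
        simpa using h3
      have := Nat.le_of_dvd (by omega) h2
      omega
    have hvαβ : vtx m α ≠ vtx m β := vtx_ne m hm hαm hβm hαβ
    set pr : Finset (Pt 2) := {vtx m α, vtx m β} with hprdef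
    have hprsub : pr ⊆ Q a := by
      intro s hs
      rcases Finset.mem_insert.1 hs with h | h
      · rw [h]; exact hαQ
      · rw [Finset.mem_singleton.1 h]; exact hβQ
    have hprcard : pr.card = 2 := by
      rw [hprdef, Finset.card_insert_of_notMem (by simp [hvαβ]), Finset.card_singleton]
    set Y := Q a \ pr with hYdef
    have hYsub : Y ⊆ S := Finset.Subset.trans Finset.sdiff_subset (hQsub a)
    have hYcard : Y.card = t := by
      rw [hYdef, Finset.card_sdiff_of_subset hprsub, hacard, hprcard]
      omega
    set arc := (Finset.Ico 1 g).image (fun j => vtx m ((α + j) % m)) with harcdef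
    set hit := Finset.univ.filter (fun b : Fin k => (Q b ∩ arc).Nonempty) with hhitdef
    have hhitcard : hit.card ≤ g - 1 := by
      have hmap : ∀ i ∈ hit,
          (if h : (Q i ∩ arc).Nonempty then h.choose else vtx m 0) ∈ arc := by
        intro i hi
        have hne : (Q i ∩ arc).Nonempty := (Finset.mem_filter.1 hi).2
        rw [dif_pos hne]
        exact (Finset.mem_inter.1 hne.choose_spec).2
      have hinj : Set.InjOn
          (fun i => if h : (Q i ∩ arc).Nonempty then h.choose else vtx m 0) ↑hit := by
        intro i hi j hj heq
        by_contra hne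
        have hi' : (Q i ∩ arc).Nonempty := (Finset.mem_filter.1 (Finset.mem_coe.1 hi)).2
        have hj' : (Q j ∩ arc).Nonempty := (Finset.mem_filter.1 (Finset.mem_coe.1 hj)).2
        simp only [dif_pos hi', dif_pos hj'] at heq
        have h1 := (Finset.mem_inter.1 hi'.choose_spec).1
        have h2 := (Finset.mem_inter.1 hj'.choose_spec).1
        rw [heq] at h1
        exact Finset.disjoint_left.1 (hdisj i j hne) h1 h2
      calc hit.card ≤ arc.card := Finset.card_le_card_of_injOn _ hmap hinj
      _ ≤ (Finset.Ico 1 g).card := Finset.card_image_le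
      _ = g - 1 := by rw [Nat.card_Ico]
    have hbex : ∃ b : Fin k, b ∉ insert a hit := by
      by_contra hall
      push_neg at hall
      have h1 := Finset.card_le_card (fun x _ => hall x :
        (Finset.univ : Finset (Fin k)) ⊆ insert a hit)
      rw [Finset.card_univ, Fintype.card_fin] at h1
      have h2 := Finset.card_insert_le a hit
      omega
    obtain ⟨b, hbmem⟩ := hbex
    have hba : b ≠ a := fun h => hbmem (h ▸ Finset.mem_insert_self a hit)
    have hbarc : ∀ s ∈ Q b, s ∉ arc := by
      intro s hsb hsarc
      exact hbmem (Finset.mem_insert.2 (Or.inr (Finset.mem_filter.2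
        ⟨Finset.mem_univ b, ⟨s, Finset.mem_inter.2 ⟨hsb, hsarc⟩⟩⟩)))
    obtain ⟨x, hx⟩ := hTol Y hYsub hYcard.le
    have hQaY : Q a \ Y = pr := by
      rw [hYdef, Finset.sdiff_sdiff_self_left, Finset.inter_eq_right.2 hprsub]
    have hxa := Set.mem_iInter.1 hx a
    rw [hQaY] at hxa
    set u : Pt 2 := vtx m α + vtx m β with hudef
    set D : ℝ := 1 + Real.cos (2*π*g/m) with hDdef
    have hβs : ⟪vtx m α, vtx m β⟫ = Real.cos (2*π*g/m) := by
      rw [hβdef]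
      exact inner_vtx_shift m α g hm
    have hfα : ⟪u, vtx m α⟫ = D := by
      rw [hudef, inner_add_left, inner_vtx_self]
      have h1 : ⟪vtx m β, vtx m α⟫ = Real.cos (2*π*g/m) := by
        rw [real_inner_comm]
        exact hβs
      rw [h1, hDdef]
    have hfβ : ⟪u, vtx m β⟫ = D := by
      rw [hudef, inner_add_left, inner_vtx_self, hβs, hDdef]
      ring
    have hxaD : D ≤ ⟪u, x⟫ := by
      have hsub : (pr : Set (Pt 2)) ⊆ {y | D ≤ ⟪u, y⟫} := by
        intro s hs
        rw [hprdef] at hs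
        simp only [Finset.coe_insert, Finset.coe_singleton, Set.mem_insert_iff,
          Set.mem_singleton_iff] at hs
        rcases hs with rfl | rfl
        · exact hfα.ge
        · exact hfβ.ge
      exact hull_ge hsub hxa
    have hxb := Set.mem_iInter.1 hx b
    have hboundb : ∀ s ∈ ((Q b \ Y : Finset (Pt 2)) : Set (Pt 2)), ⟪u, s⟫ < D := by
      intro s hs
      have hsQb : s ∈ Q b := (Finset.mem_sdiff.1 (Finset.mem_coe.1 hs)).1
      have hsQa : s ∉ Q a := Finset.disjoint_left.1 (hdisj b a hba) hsQb
      have hsS := hQsub b hsQb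
      rw [hS] at hsS
      rcases Finset.mem_union.1 hsS with hV | hC
      · obtain ⟨i, him, hiv⟩ := Finset.mem_image.1 hV
        have him' : i < m := Finset.mem_range.1 him
        set J := (i + m - α) % m with hJdef
        have hJm : J < m := Nat.mod_lt _ hm
        have hJi : (α + J) % m = i := by
          calc (α + J) % m = (α + (i + m - α)) % m := by rw [hJdef, Nat.add_mod_mod]
          _ = (i + m) % m := by congr 1; omega
          _ = i % m := Nat.add_mod_right i m
          _ = i := Nat.mod_eq_of_lt him'
        have hJ0 : J ≠ 0 := by
          intro h
          have hiα : i = α := by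
            rw [← hJi, h, Nat.add_zero, Nat.mod_eq_of_lt hαm]
          apply hsQa
          rw [← hiv, hiα]
          exact hαQ
        have hJg : J ≠ g := by
          intro h
          have hiβ : i = β := by rw [← hJi, h, hβdef]
          apply hsQa
          rw [← hiv, hiβ]
          exact hβQ
        have hJarc : ¬ (1 ≤ J ∧ J < g) := by
          rintro ⟨h1, h2⟩
          apply hbarc s hsQb
          rw [harcdef]
          exact Finset.mem_image.2 ⟨J, Finset.mem_Ico.2 ⟨h1, h2⟩, by rw [hJi, hiv]⟩
        have hJgt : g < J := by omega
        have e2 : ⟪vtx m α, s⟫ = Real.cos (2*π*J/m) := by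
          rw [← hiv, ← hJi]
          exact inner_vtx_shift m α J hm
        have e3 : ⟪vtx m β, s⟫ = Real.cos (2*π*((J-g:ℕ):ℕ)/m) := by
          have e4 : (β + (J - g)) % m = i := by
            calc (β + (J-g)) % m = ((α+g) % m + (J-g)) % m := by rw [hβdef]
            _ = ((α+g) + (J-g)) % m := Nat.mod_add_mod _ _ _
            _ = (α + J) % m := by congr 1; omega
            _ = i := hJi
          rw [← hiv, ← e4]
          exact inner_vtx_shift m β (J-g) hm
        rw [hudef, inner_add_left, e2, e3, hDdef]
        exact main_ineq m g J hm hg1 h3g hJgt hJm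
      · obtain ⟨j, hjc, hjv⟩ := Finset.mem_image.1 hC
        have hjc' : j < c := Finset.mem_range.1 hjc
        rw [hudef, inner_add_left, ← hjv]
        have b1 : ⟪vtx m α, ctr c j⟫ ≤ 1/4 := inner_vtx_ctr_le m c α j hc hjc'
        have b2 : ⟪vtx m β, ctr c j⟫ ≤ 1/4 := inner_vtx_ctr_le m c β j hc hjc'
        have b3 := cos_g_gt m g hm h3g
        rw [hDdef]
        linarith
    have hltb := hull_lt hboundb hxb
    simp only [Set.mem_setOf_eq] at hltb
    linarith
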